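/- If V solves the Sylvester equation A V = E V S + B R with S diagonalizable via T S T⁻¹ = diag(σ₁,…,σ_q) and R T⁻¹ = [r₁,…,r_q], then each column of V T⁻¹ equals (A - σᵢE)⁻¹ B rᵢ; consequently any reduced model G_r(s) = C V (s W^T E V - W^T A V)⁻¹ W^T B with σᵢ outside both spectra satisfies the right tangential interpolation conditions G(σᵢ) rᵢ = G_r(σᵢ) rᵢ. -/

import Mathlib

open Matrix

/-- If `M` is invertible and `M *ᵥ x = b`, then `M⁻¹ *ᵥ b = x`. -/
lemma inv_mulVec_eq_of {k : ℕ} (M : Matrix (Fin k) (Fin k) ℂ) (hM : IsUnit M.det)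
    (x b : Fin k → ℂ) (h : M *ᵥ x = b) : M⁻¹ *ᵥ b = x := by
  rw [← h, Matrix.mulVec_mulVec, Matrix.nonsing_inv_mul _ hM, Matrix.one_mulVec]

/-- If `V` solves `A V = E V S + B R` with `S` diagonalizable via
`T S T⁻¹ = diag(σᵢ)` and `R T⁻¹ = [r₁,…,r_q]`, then the columns of `V T⁻¹` are
`(A - σᵢ E)⁻¹ B rᵢ`, and any Petrov-Galerkin reduced model whose pencil has no
eigenvalue among the `σᵢ` satisfies the right tangential interpolation conditions. -/
theorem stmt1 {n m p q : ℕ}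
    (E A : Matrix (Fin n) (Fin n) ℂ) (B : Matrix (Fin n) (Fin m) ℂ)
    (C : Matrix (Fin p) (Fin n) ℂ)
    (V W : Matrix (Fin n) (Fin q) ℂ)
    (S : Matrix (Fin q) (Fin q) ℂ) (R : Matrix (Fin m) (Fin q) ℂ)
    (T : Matrix (Fin q) (Fin q) ℂ) (hT : IsUnit T.det)
    (σ : Fin q → ℂ) (hσ : Function.Injective σ)
    (hdiag : T * S * T⁻¹ = Matrix.diagonal σ)
    (hRT : ∀ i, (fun k => (R * T⁻¹) k i) ≠ 0)
    (hσspec : ∀ i, IsUnit (A - σ i • E).det)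
    (hSyl : A * V = E * V * S + B * R)
    (hred : ∀ i, IsUnit (σ i • (Wᵀ * E * V) - Wᵀ * A * V).det) :
    (∀ i, (fun j => (V * T⁻¹) j i)
        = (A - σ i • E)⁻¹ *ᵥ (B *ᵥ fun k => (R * T⁻¹) k i)) ∧
    (∀ i, (C * (σ i • E - A)⁻¹ * B) *ᵥ (fun k => (R * T⁻¹) k i)
        = (C * V * (σ i • (Wᵀ * E * V) - Wᵀ * A * V)⁻¹ * (Wᵀ * B)) *ᵥ
            (fun k => (R * T⁻¹) k i)) := by
  have hT' : T⁻¹ * T = 1 := Matrix.nonsing_inv_mul T hT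
  -- transformed Sylvester equation
  have hSyl' : A * (V * T⁻¹) = E * (V * T⁻¹) * Matrix.diagonal σ + B * (R * T⁻¹) := by
    rw [← hdiag]
    have h1 : E * (V * T⁻¹) * (T * S * T⁻¹) = E * V * S * T⁻¹ := by
      calc E * (V * T⁻¹) * (T * S * T⁻¹)
          = E * (V * ((T⁻¹ * T) * (S * T⁻¹))) := by
            simp only [Matrix.mul_assoc]
        _ = E * V * S * T⁻¹ := by rw [hT']; simp only [Matrix.one_mul, Matrix.mul_assoc]
    rw [h1, ← Matrix.mul_assoc, hSyl, Matrix.add_mul, Matrix.mul_assoc B]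
  -- column notation
  set c : Fin q → Fin q → ℂ := fun i => Pi.single i 1 with hc
  have hcol : ∀ (i : Fin q) (M : Matrix (Fin m) (Fin q) ℂ),
      (fun k => M k i) = M *ᵥ c i := by
    intro i M; funext k; simp [hc, Matrix.mulVec_single]
  have hcolV : ∀ i, (fun j => (V * T⁻¹) j i) = (V * T⁻¹) *ᵥ c i := by
    intro i; funext j; simp [hc, Matrix.mulVec_single]
  -- key: (A - σᵢ E) ṽᵢ = B r̃ᵢ
  have key : ∀ i, (A - σ i • E) *ᵥ ((V * T⁻¹) *ᵥ c i)
      = B *ᵥ ((R * T⁻¹) *ᵥ c i) := by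
    intro i
    funext j
    have h0 := congrFun (congrFun hSyl' j) i
    simp only [Matrix.add_apply, Matrix.mul_diagonal] at h0
    simp only [Matrix.mulVec_mulVec]
    simp only [hc, Matrix.mulVec_single, mul_one, MulOpposite.op_one, one_smul, Matrix.col_apply]
    simp only [Matrix.sub_mul, Matrix.sub_apply, Matrix.smul_mul, Matrix.smul_apply,
      smul_eq_mul]
    linear_combination h0
  -- part 1
  have part1 : ∀ i, (fun j => (V * T⁻¹) j i)
      = (A - σ i • E)⁻¹ *ᵥ (B *ᵥ fun k => (R * T⁻¹) k i) := by
    intro i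
    rw [hcolV, hcol i (R * T⁻¹)]
    exact (inv_mulVec_eq_of _ (hσspec i) _ _ (key i)).symm
  refine ⟨part1, fun i => ?_⟩
  -- part 2
  have hdet2 : IsUnit (σ i • E - A).det := by
    have hneg : σ i • E - A = -(A - σ i • E) := by abel
    rw [hneg, Matrix.det_neg]
    exact (isUnit_one.neg.pow _).mul (hσspec i)
  -- LHS
  have hL : (σ i • E - A)⁻¹ *ᵥ (B *ᵥ ((R * T⁻¹) *ᵥ c i)) = -((V * T⁻¹) *ᵥ c i) := by
    apply inv_mulVec_eq_of _ hdet2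
    have h3 : (σ i • E - A) *ᵥ (-((V * T⁻¹) *ᵥ c i))
        = (A - σ i • E) *ᵥ ((V * T⁻¹) *ᵥ c i) := by
      rw [Matrix.mulVec_neg, Matrix.sub_mulVec, Matrix.sub_mulVec]
      abel
    rw [h3, key i]
  -- RHS reduced
  have hM : Wᵀ * (A - σ i • E) * V = -(σ i • (Wᵀ * E * V) - Wᵀ * A * V) := by
    rw [Matrix.mul_sub, Matrix.sub_mul, Matrix.mul_smul, Matrix.smul_mul, neg_sub]
  have h2 : (σ i • (Wᵀ * E * V) - Wᵀ * A * V) *ᵥ (-(T⁻¹ *ᵥ c i))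
      = (Wᵀ * B) *ᵥ ((R * T⁻¹) *ᵥ c i) := by
    have step1 : (σ i • (Wᵀ * E * V) - Wᵀ * A * V) *ᵥ (-(T⁻¹ *ᵥ c i))
        = (Wᵀ * ((A - σ i • E) * (V * T⁻¹))) *ᵥ c i := by
      rw [Matrix.mulVec_neg, ← Matrix.neg_mulVec, ← hM, Matrix.mulVec_mulVec]
      simp only [Matrix.mul_assoc]
    rw [step1, ← Matrix.mulVec_mulVec, ← Matrix.mulVec_mulVec, key i,
      Matrix.mulVec_mulVec]
  have hR : (σ i • (Wᵀ * E * V) - Wᵀ * A * V)⁻¹ *ᵥ ((Wᵀ * B) *ᵥ ((R * T⁻¹) *ᵥ c i))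
      = -(T⁻¹ *ᵥ c i) := inv_mulVec_eq_of _ (hred i) _ _ h2
  calc (C * (σ i • E - A)⁻¹ * B) *ᵥ (fun k => (R * T⁻¹) k i)
      = C *ᵥ ((σ i • E - A)⁻¹ *ᵥ (B *ᵥ ((R * T⁻¹) *ᵥ c i))) := by
        rw [hcol i (R * T⁻¹)]
        simp only [Matrix.mulVec_mulVec, Matrix.mul_assoc]
    _ = C *ᵥ (-((V * T⁻¹) *ᵥ c i)) := by rw [hL]
    _ = (C * V) *ᵥ (-(T⁻¹ *ᵥ c i)) := by
        rw [Matrix.mulVec_neg, Matrix.mulVec_neg, Matrix.mulVec_mulVec,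
          Matrix.mulVec_mulVec, Matrix.mul_assoc]
    _ = (C * V) *ᵥ ((σ i • (Wᵀ * E * V) - Wᵀ * A * V)⁻¹ *ᵥ
          ((Wᵀ * B) *ᵥ ((R * T⁻¹) *ᵥ c i))) := by rw [hR]
    _ = (C * V * (σ i • (Wᵀ * E * V) - Wᵀ * A * V)⁻¹ * (Wᵀ * B)) *ᵥ
            (fun k => (R * T⁻¹) k i) := by
        rw [hcol i (R * T⁻¹)]
        simp only [Matrix.mulVec_mulVec, Matrix.mul_assoc]
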